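/- arXiv:0809.0144 — 2 statements merged into one kernel-verified Lean document; each statement's English description precedes it below -/
import Mathlib

section
/- Let q = e^{iπ/p} and let z, d be the p×p matrices with z the lower shift and d_{j-1,j} = (q-q⁻¹)q^{2-j}[j-1]_q. Then the p² matrices z^m·d^n for 0 ≤ m, n ≤ p-1 are linearly independent, hence span Mat_p(ℂ); i.e., the quotient algebra ℂ̄_q[z,∂] is isomorphic to Mat_p(ℂ). -/
noncomputable def qint (q : ℂ) (n : ℕ) : ℂ := (q ^ n - q⁻¹ ^ n) / (q - q⁻¹)

noncomputable def zmat (p : ℕ) : Matrix (Fin p) (Fin p) ℂ :=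
  Matrix.of fun i j => if (i : ℕ) = (j : ℕ) + 1 then 1 else 0

noncomputable def dmat (p : ℕ) (q : ℂ) : Matrix (Fin p) (Fin p) ℂ :=
  Matrix.of fun i j =>
    if (j : ℕ) = (i : ℕ) + 1 then (q - q⁻¹) * q ^ (1 - ((j : ℕ) : ℤ)) * qint q (j : ℕ)
    else 0

section aux
variable {p : ℕ} (hp : 2 ≤ p) {q : ℂ}
  (hq : q = Complex.exp ((Real.pi : ℂ) * Complex.I / (p : ℂ)))

include hq in
lemma q_ne_zero : q ≠ 0 := by rw [hq]; exact Complex.exp_ne_zero _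

include hp hq in
lemma q_pow_ne_one {k : ℕ} (h1 : 0 < k) (h2 : k < p) : q ^ (2 * k) ≠ 1 := by
  have hp0 : (p : ℂ) ≠ 0 := Nat.cast_ne_zero.mpr (by omega)
  have hπ : (Real.pi : ℂ) ≠ 0 := by exact_mod_cast Real.pi_ne_zero
  rw [hq, ← Complex.exp_nat_mul]
  intro hone
  rw [Complex.exp_eq_one_iff] at hone
  obtain ⟨m, hm⟩ := hone
  have : (k : ℂ) = m * p := by
    field_simp at hm
    have hI := Complex.I_ne_zero
    have h2' : (2:ℂ) ≠ 0 := two_ne_zero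
    apply mul_left_cancel₀ (mul_ne_zero (mul_ne_zero h2' hπ) hI)
    ring_nf
    ring_nf at hm
    push_cast at hm
    linear_combination (↑Real.pi * Complex.I) * hm
  have hz : (k : ℤ) = m * p := by exact_mod_cast this
  have : (p:ℤ) ∣ (k:ℤ) := ⟨m, by linarith [hz]⟩
  have := Int.le_of_dvd (by exact_mod_cast h1) this
  omega

include hp hq in
lemma q_sub_inv_ne_zero : q - q⁻¹ ≠ 0 := by
  intro h
  have hq0 := q_ne_zero hq
  have hqi : q = q⁻¹ := sub_eq_zero.mp h
  have h2 : q ^ (2*1) = 1 := by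
    calc q ^ (2*1) = q * q := by ring
    _ = q * q⁻¹ := by nth_rewrite 2 [hqi]; rfl
    _ = 1 := mul_inv_cancel₀ hq0
  exact q_pow_ne_one hp hq Nat.one_pos (by omega) h2

include hp hq in
lemma qint_ne_zero {k : ℕ} (h1 : 0 < k) (h2 : k < p) : qint q k ≠ 0 := by
  have hq0 := q_ne_zero hq
  apply div_ne_zero _ (q_sub_inv_ne_zero hp hq)
  intro h
  have hqk : q ^ k ≠ 0 := pow_ne_zero _ hq0
  have e : q ^ k = (q ^ k)⁻¹ := by rw [← inv_pow]; exact sub_eq_zero.mp h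
  have h2' : q ^ (2*k) = 1 := by
    rw [two_mul, pow_add]
    nth_rewrite 2 [e]
    exact mul_inv_cancel₀ hqk
  exact q_pow_ne_one hp hq h1 h2 h2'

end aux

lemma zmat_pow (p m : ℕ) (i j : Fin p) :
    (zmat p ^ m) i j = if (i : ℕ) = (j : ℕ) + m then 1 else 0 := by
  induction m generalizing j with
  | zero => simp [Matrix.one_apply, Fin.ext_iff]
  | succ m ih =>
    rw [pow_succ, Matrix.mul_apply]
    by_cases hj : (j:ℕ) + 1 < p
    · rw [Finset.sum_eq_single (⟨(j:ℕ)+1, hj⟩ : Fin p)]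
      · rw [ih]
        simp only [zmat, Matrix.of_apply, if_pos rfl, mul_one]
        have h' : ((j:ℕ) + 1 + m) = (j:ℕ) + (m+1) := by omega
        rw [h']
        simp
      · intro k _ hk
        have hk' : (k:ℕ) ≠ (j:ℕ)+1 := fun h => hk (Fin.ext h)
        simp [zmat, hk']
      · simp
    · have h1 : ∀ k : Fin p, zmat p k j = 0 := by
        intro k
        have hk := k.isLt
        have : (k:ℕ) ≠ (j:ℕ)+1 := by omega
        simp [zmat, this]
      have hi := i.isLt
      have : (i:ℕ) ≠ (j:ℕ) + (m+1) := by omega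
      simp [h1, this]

lemma dmat_pow_support (p : ℕ) (q : ℂ) (n : ℕ) (i j : Fin p) (h : (j:ℕ) ≠ (i:ℕ) + n) :
    (dmat p q ^ n) i j = 0 := by
  induction n generalizing j with
  | zero =>
    simp only [Nat.add_zero] at h
    exact Matrix.one_apply_ne (fun e => h (congrArg Fin.val e).symm)
  | succ n ih =>
    rw [pow_succ, Matrix.mul_apply]
    apply Finset.sum_eq_zero
    intro k _
    by_cases hk : (k:ℕ) = (i:ℕ) + n
    · have hj : (j:ℕ) ≠ (k:ℕ) + 1 := by omega
      simp [dmat, hj]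
    · rw [ih k hk, zero_mul]

lemma dmat_pow_diag {p : ℕ} (hp : 2 ≤ p) {q : ℂ}
    (hq : q = Complex.exp ((Real.pi : ℂ) * Complex.I / (p : ℂ)))
    (n : ℕ) (i j : Fin p) (hij : (j:ℕ) = (i:ℕ) + n) :
    (dmat p q ^ n) i j ≠ 0 := by
  induction n generalizing j with
  | zero =>
    have : i = j := Fin.ext (by omega)
    rw [← this, pow_zero, Matrix.one_apply_eq]
    exact one_ne_zero
  | succ n ih =>
    have hjp := j.isLt
    have hkp : (i:ℕ) + n < p := by omega
    rw [pow_succ, Matrix.mul_apply, Finset.sum_eq_single (⟨(i:ℕ)+n, hkp⟩ : Fin p)]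
    · apply mul_ne_zero (ih ⟨(i:ℕ)+n, hkp⟩ rfl)
      simp only [dmat, Matrix.of_apply]
      rw [if_pos (show (j:ℕ) = (i:ℕ) + n + 1 by omega)]
      exact mul_ne_zero (mul_ne_zero (q_sub_inv_ne_zero hp hq)
        (zpow_ne_zero _ (q_ne_zero hq)))
        (qint_ne_zero hp hq (by omega) hjp)
    · intro b _ hb
      have hb' : (b:ℕ) ≠ (i:ℕ) + n := fun e => hb (Fin.ext e)
      rw [dmat_pow_support p q n i b hb', zero_mul]
    · simp

lemma zd_support (p m n : ℕ) (q : ℂ) (i j : Fin p)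
    (h : ¬ (m ≤ (i:ℕ) ∧ (j:ℕ) + m = (i:ℕ) + n)) :
    (zmat p ^ m * dmat p q ^ n) i j = 0 := by
  rw [Matrix.mul_apply]
  apply Finset.sum_eq_zero
  intro k _
  by_cases hk : (i:ℕ) = (k:ℕ) + m
  · have hj : (j:ℕ) ≠ (k:ℕ) + n := by omega
    rw [dmat_pow_support p q n k j hj, mul_zero]
  · rw [zmat_pow p m i k, if_neg hk, zero_mul]

lemma zd_nonzero {p : ℕ} (hp : 2 ≤ p) {q : ℂ}
    (hq : q = Complex.exp ((Real.pi : ℂ) * Complex.I / (p : ℂ)))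
    (m n : ℕ) (i j : Fin p)
    (hm : m ≤ (i:ℕ)) (hj : (j:ℕ) + m = (i:ℕ) + n) :
    (zmat p ^ m * dmat p q ^ n) i j ≠ 0 := by
  have hlt : (i:ℕ) - m < p := lt_of_le_of_lt (Nat.sub_le _ _) i.isLt
  rw [Matrix.mul_apply, Finset.sum_eq_single (⟨(i:ℕ) - m, hlt⟩ : Fin p)]
  · rw [zmat_pow, if_pos (by simp; omega), one_mul]
    exact dmat_pow_diag hp hq n _ j (by simp; omega)
  · intro b _ hb
    have hb' : (i:ℕ) ≠ (b:ℕ) + m := by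
      intro e
      exact hb (Fin.ext (by simp; omega))
    rw [zmat_pow, if_neg hb', zero_mul]
  · simp

/-- for `q = e^{iπ/p}`, the `p²` matrices `z^m d^n`, `0 ≤ m, n ≤ p-1`,
are linearly independent, hence span `Mat_p(ℂ)`; i.e. `ℂ̄_q[z,∂] ≅ Mat_p(ℂ)`. -/
theorem stmt11 (p : ℕ) (hp : 2 ≤ p) (q : ℂ)
    (hq : q = Complex.exp ((Real.pi : ℂ) * Complex.I / (p : ℂ))) :
    LinearIndependent ℂ
        (fun mn : Fin p × Fin p => zmat p ^ (mn.1 : ℕ) * dmat p q ^ (mn.2 : ℕ)) ∧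
    Submodule.span ℂ
        (Set.range fun mn : Fin p × Fin p => zmat p ^ (mn.1 : ℕ) * dmat p q ^ (mn.2 : ℕ))
      = ⊤ := by
  have hli : LinearIndependent ℂ
      (fun mn : Fin p × Fin p => zmat p ^ (mn.1 : ℕ) * dmat p q ^ (mn.2 : ℕ)) := by
    rw [Fintype.linearIndependent_iff]
    intro g hg
    have key : ∀ s : ℕ, ∀ mn : Fin p × Fin p, (mn.1:ℕ) + (mn.2:ℕ) = s → g mn = 0 := by
      intro s
      induction s using Nat.strong_induction_on with
      | _ s ih =>
      rintro ⟨m, n⟩ hs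
      replace hs : (m:ℕ) + (n:ℕ) = s := hs
      have h0 : (∑ mn : Fin p × Fin p,
          g mn • (zmat p ^ (mn.1:ℕ) * dmat p q ^ (mn.2:ℕ))) m n = 0 := by
        rw [hg]; rfl
      rw [Matrix.sum_apply] at h0
      simp only [Matrix.smul_apply, smul_eq_mul] at h0
      rw [Finset.sum_eq_single ((m, n) : Fin p × Fin p)] at h0
      · have hne := zd_nonzero hp hq (m:ℕ) (n:ℕ) m n le_rfl (Nat.add_comm _ _)
        exact (mul_eq_zero.mp h0).resolve_right hne
      · rintro ⟨m', n'⟩ _ hne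
        by_cases hsupp : (m':ℕ) ≤ (m:ℕ) ∧ (n:ℕ) + (m':ℕ) = (m:ℕ) + (n':ℕ)
        · have hlt : (m':ℕ) + (n':ℕ) < s := by
            have : m' ≠ m ∨ n' ≠ n := by
              by_contra hc
              push_neg at hc
              exact hne (Prod.ext hc.1 hc.2)
            have hv : (m':ℕ) ≠ (m:ℕ) ∨ (n':ℕ) ≠ (n:ℕ) := by
              rcases this with h | h
              · exact Or.inl (fun e => h (Fin.ext e))
              · exact Or.inr (fun e => h (Fin.ext e))
            rcases hv with h | h <;> omega
          rw [ih _ hlt (m', n') rfl, zero_mul]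
        · rw [zd_support p (m':ℕ) (n':ℕ) q m n hsupp, mul_zero]
      · intro hmem
        exact absurd (Finset.mem_univ _) hmem
    intro mn
    exact key ((mn.1:ℕ) + (mn.2:ℕ)) mn rfl
  refine ⟨hli, ?_⟩
  have : Nonempty (Fin p) := ⟨⟨0, by omega⟩⟩
  apply hli.span_eq_top_of_card_eq_finrank
  rw [Module.finrank_matrix]
  simp [Fintype.card_prod]
end

section
/- With the U-action E(z^m∂^n) = q^{1-n}[n]_q z^m∂^{n-1} - q^{m-2n}[m]_q z^{m+1}∂^n on Ā = ℂ̄_q[z,∂] at q = e^{iπ/p}, let p = 2s+1 be odd and set t₁ = Σ_{i=0}^{s} q^{is}·[s+i-1 choose i]_q·z^{i+s}·∂^i. Then E(t₁) = 0. -/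
/-- The balanced Gaussian `q`-binomial coefficient, via the `q`-Pascal recursion. -/
noncomputable def qbinomG (q : ℂ) : ℕ → ℕ → ℂ
  | _, 0 => 1
  | 0, _ + 1 => 0
  | n + 1, k + 1 =>
      q ^ (k + 1) * qbinomG q n (k + 1) + q ^ (((k : ℤ) + 1) - ((n : ℤ) + 1)) * qbinomG q n k

lemma pascal' (q : ℂ) (hq : q ≠ 0) (n k : ℕ) :
    q ^ (n+1) * qbinomG q (n+1) (k+1)
      = q ^ (n+k+2) * qbinomG q n (k+1) + q ^ (k+1) * qbinomG q n k := by
  have h : (q : ℂ) ^ (n+1) * q ^ (((k : ℤ) + 1) - ((n : ℤ) + 1)) = q ^ (k+1) := by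
    rw [← zpow_natCast q (n+1), ← zpow_add₀ hq, ← zpow_natCast q (k+1)]
    congr 1
    push_cast
    ring
  rw [show qbinomG q (n+1) (k+1) = q ^ (k + 1) * qbinomG q n (k + 1)
      + q ^ (((k : ℤ) + 1) - ((n : ℤ) + 1)) * qbinomG q n k from rfl]
  rw [mul_add, ← mul_assoc, ← mul_assoc, h]
  ring

lemma qbinom_zero (q : ℂ) (k : ℕ) : qbinomG q 0 (k+1) = 0 := rfl
lemma qbinom_nzero (q : ℂ) (n : ℕ) : qbinomG q n 0 = 1 := by cases n <;> rfl

/-- The key identity: `q^n [n;k+1](q^{2k+2}-1) = q [n;k](q^{2n}-q^{2k})`. -/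
lemma idG (q : ℂ) (hq : q ≠ 0) : ∀ n k : ℕ,
    q ^ n * qbinomG q n (k+1) * (q ^ (2*k+2) - 1)
      = q * qbinomG q n k * (q ^ (2*n) - q ^ (2*k)) := by
  intro n
  induction n with
  | zero =>
    intro k
    cases k with
    | zero => simp [qbinom_zero, qbinom_nzero]
    | succ k => simp [qbinom_zero]
  | succ n ih =>
    have H : ∀ k : ℕ, q ^ k * qbinomG q n k * (q ^ (2*n+2) - 1)
        = qbinomG q (n+1) k * (q ^ (2*n+2) - q ^ (2*k)) := by
      intro k
      induction k with
      | zero => simp [qbinom_nzero]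
      | succ k ihk =>
        have hp := pascal' q hq n k
        have hg := ih k
        have hcan : q ^ (n+1) * (q ^ (k+1) * qbinomG q n (k+1) * (q ^ (2*n+2) - 1))
            = q ^ (n+1) * (qbinomG q (n+1) (k+1) * (q ^ (2*n+2) - q ^ (2*(k+1)))) := by
          linear_combination (q^(2*(k+1)) - q^(2*n+2)) * hp + q^(k+2) * hg
        exact mul_left_cancel₀ (pow_ne_zero _ hq) hcan
    intro k
    have hp := pascal' q hq n k
    have hg := ih k
    have hH := H k
    have hcan : q ^ (n+1) * (q ^ (n+1) * qbinomG q (n+1) (k+1) * (q ^ (2*k+2) - 1))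
        = q ^ (n+1) * (q * qbinomG q (n+1) k * (q ^ (2*(n+1)) - q ^ (2*k))) := by
      linear_combination (q^(n+1)*(q^(2*k+2)-1)) * hp + q^(n+2) * hH + q^(n+k+3) * hg
    exact mul_left_cancel₀ (pow_ne_zero _ hq) hcan

/-- absorption identity, cleared form:
`q^{n+1} [n+1;k+1](q^{2k+2}-1) = q^{k+1} [n;k](q^{2n+2}-1)`. -/
lemma idA (q : ℂ) (hq : q ≠ 0) (n k : ℕ) :
    q ^ (n+1) * qbinomG q (n+1) (k+1) * (q ^ (2*k+2) - 1)
      = q ^ (k+1) * qbinomG q n k * (q ^ (2*n+2) - 1) := by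
  have hp := pascal' q hq n k
  have hg := idG q hq n k
  linear_combination (q^(2*k+2)-1) * hp + q^(k+2) * hg

lemma qint_div (q : ℂ) (hq : q ≠ 0) (hd : q - q⁻¹ ≠ 0) (m : ℕ) :
    qint q m = (q ^ (2*m) - 1) / ((q - q⁻¹) * q ^ m) := by
  rw [qint, inv_pow, div_eq_div_iff hd (mul_ne_zero hd (pow_ne_zero m hq))]
  field_simp
  ring

lemma coefEq (q : ℂ) (hq : q ≠ 0) (s j : ℕ) (hs : 1 ≤ s) :
    (q ^ (1 - (((j:ℕ)+1 : ℕ) : ℤ)) * qint q (j+1)) * (q ^ ((j+1)*s) * qbinomG q (s+j) (j+1))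
      = (q ^ (((j+s : ℕ) : ℤ) - 2*(j:ℤ)) * qint q (j+s)) * (q ^ (j*s) * qbinomG q (s+j-1) j) := by
  by_cases hd : q - q⁻¹ = 0
  · simp [qint, hd]
  · have hA := idA q hq (s+j-1) j
    rw [show s+j-1+1 = s+j from by omega, show 2*(s+j-1)+2 = 2*(s+j) from by omega] at hA
    have e1 : q ^ (1 - (((j:ℕ)+1 : ℕ) : ℤ)) = (q ^ j)⁻¹ := by
      rw [show (1 - (((j:ℕ)+1 : ℕ) : ℤ)) = -(j:ℤ) by push_cast; ring, zpow_neg, zpow_natCast]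
    have e2 : q ^ (((j+s : ℕ) : ℤ) - 2*(j:ℤ)) = q ^ s * (q ^ j)⁻¹ := by
      rw [show (((j+s : ℕ) : ℤ) - 2*(j:ℤ)) = (s:ℤ) + (-(j:ℤ)) by push_cast; ring,
        zpow_add₀ hq, zpow_neg, zpow_natCast, zpow_natCast]
    rw [e1, e2, qint_div q hq hd, qint_div q hq hd]
    set c := q - q⁻¹ with hc
    clear_value c
    field_simp
    linear_combination (q^(j*s) * q^s) * hA


/-- The defining relations of `Ā = ℂ̄_q[z,∂]` (generator `0` is `z`, `1` is `∂`). -/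
inductive CqBarRel (q : ℂ) (p : ℕ) : FreeAlgebra ℂ (Fin 2) → FreeAlgebra ℂ (Fin 2) → Prop
  | main : CqBarRel q p (FreeAlgebra.ι ℂ 1 * FreeAlgebra.ι ℂ 0)
      ((q - q⁻¹) • (1 : FreeAlgebra ℂ (Fin 2))
        + (q⁻¹ ^ 2) • (FreeAlgebra.ι ℂ 0 * FreeAlgebra.ι ℂ 1))
  | zp : CqBarRel q p ((FreeAlgebra.ι ℂ 0) ^ p) 0
  | dp : CqBarRel q p ((FreeAlgebra.ι ℂ 1) ^ p) 0

/-- The image of `z` in `Ā`. -/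
noncomputable def zbar (q : ℂ) (p : ℕ) : RingQuot (CqBarRel q p) :=
  RingQuot.mkRingHom (CqBarRel q p) (FreeAlgebra.ι ℂ 0)

/-- The image of `∂` in `Ā`. -/
noncomputable def dbar (q : ℂ) (p : ℕ) : RingQuot (CqBarRel q p) :=
  RingQuot.mkRingHom (CqBarRel q p) (FreeAlgebra.ι ℂ 1)

/-- for odd `p = 2s+1` and the `U`-action
`E(z^m∂^n) = q^{1-n}[n]_q z^m∂^{n-1} - q^{m-2n}[m]_q z^{m+1}∂^n` on `Ā = ℂ̄_q[z,∂]`,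
the element `t₁ = Σ_{i=0}^{s} q^{is} [s+i-1 choose i]_q z^{i+s}∂^i` satisfies `E(t₁) = 0`. -/
theorem stmt15 (p s : ℕ) (hs : 1 ≤ s) (hps : p = 2 * s + 1) (q : ℂ)
    (hq : q = Complex.exp ((Real.pi : ℂ) * Complex.I / (p : ℂ)))
    (E : Module.End ℂ (RingQuot (CqBarRel q p)))
    (hE : ∀ m n : ℕ, E (zbar q p ^ m * dbar q p ^ n)
      = (q ^ (1 - (n : ℤ)) * qint q n) • (zbar q p ^ m * dbar q p ^ (n - 1))
        - (q ^ ((m : ℤ) - 2 * (n : ℤ)) * qint q m) • (zbar q p ^ (m + 1) * dbar q p ^ n)) :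
    E (∑ i ∈ Finset.range (s + 1),
        (q ^ (i * s) * qbinomG q (s + i - 1) i) • (zbar q p ^ (i + s) * dbar q p ^ i))
      = 0 := by
  have hq0 : q ≠ 0 := by rw [hq]; exact Complex.exp_ne_zero _
  have hzp : zbar q p ^ p = 0 := by
    rw [zbar, ← map_pow, RingQuot.mkRingHom_rel CqBarRel.zp, map_zero]
  rw [map_sum]
  have step : ∀ i ∈ Finset.range (s+1),
      E ((q ^ (i * s) * qbinomG q (s + i - 1) i) • (zbar q p ^ (i + s) * dbar q p ^ i))
        = (q ^ (i * s) * qbinomG q (s + i - 1) i) •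
            ((q ^ (1 - (i : ℤ)) * qint q i) • (zbar q p ^ (i + s) * dbar q p ^ (i - 1)))
          - (q ^ (i * s) * qbinomG q (s + i - 1) i) •
            ((q ^ (((i + s : ℕ) : ℤ) - 2 * (i : ℤ)) * qint q (i + s)) •
              (zbar q p ^ ((i + s) + 1) * dbar q p ^ i)) := by
    intro i _
    rw [map_smul, hE (i + s) i, smul_sub]
  rw [Finset.sum_congr rfl step, Finset.sum_sub_distrib, sub_eq_zero,
    Finset.sum_range_succ' _ s, Finset.sum_range_succ]
  have h0 : (q ^ (0 * s) * qbinomG q (s + 0 - 1) 0) •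
      ((q ^ (1 - ((0 : ℕ) : ℤ)) * qint q 0) • (zbar q p ^ (0 + s) * dbar q p ^ (0 - 1))) = 0 := by
    simp [qint]
  have hlast : (q ^ (s * s) * qbinomG q (s + s - 1) s) •
      ((q ^ (((s + s : ℕ) : ℤ) - 2 * (s : ℤ)) * qint q (s + s)) •
        (zbar q p ^ ((s + s) + 1) * dbar q p ^ s)) = 0 := by
    rw [show (s + s) + 1 = p from by omega, hzp, zero_mul, smul_zero, smul_zero]
  rw [h0, hlast, add_zero, add_zero]
  refine Finset.sum_congr rfl fun j _ => ?_
  rw [show (j + 1) + s = (j + s) + 1 from by omega, show s + (j + 1) - 1 = s + j from by omega,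
    Nat.add_sub_cancel, smul_smul, smul_smul]
  congr 1
  have := coefEq q hq0 s j hs
  rw [show s + j - 1 = s + j - 1 from rfl] at this
  push_cast at this ⊢
  linear_combination this
end
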